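/- Let W ∈ ℝ^{N×s} have rank s and be s-row sparse (at most s nonzero rows). Then ‖W(WᵀW)^{-1/2}‖_{2,1} = s. -/

import Mathlib

open Matrix

noncomputable section

/-- The set of indices of nonzero rows of a matrix. -/
def rowSupport {N K : ℕ} (X : Matrix (Fin N) (Fin K) ℝ) : Set (Fin N) := {i | X i ≠ 0}

/-- `X` is `s`-row sparse: at most `s` of its rows are nonzero. -/
def RowSparse {N K : ℕ} (s : ℕ) (X : Matrix (Fin N) (Fin K) ℝ) : Prop :=
  (rowSupport X).ncard ≤ s

/-- `‖X‖₀`: the number of nonzero rows of `X`. -/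
def rowL0 {N K : ℕ} (X : Matrix (Fin N) (Fin K) ℝ) : ℕ := (rowSupport X).ncard

/-- `Σ_{s,r}`: matrices in `ℝ^{N×K}` that are `s`-row sparse and have rank at least `r`. -/
def SigmaSR {N K : ℕ} (s r : ℕ) : Set (Matrix (Fin N) (Fin K) ℝ) :=
  {X | RowSparse s X ∧ r ≤ X.rank}

/-- The `ℓ_{2,1}` norm of a matrix: the sum of the Euclidean norms of its rows. -/
def l21norm {N K : ℕ} (X : Matrix (Fin N) (Fin K) ℝ) : ℝ :=
  ∑ i, Real.sqrt (∑ j, (X i j) ^ 2)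

/-- If `W ∈ ℝ^{N×s}` has rank `s` and is `s`-row sparse, then the `ℓ_{2,1}` norm of its
orthogonal factor `W * S⁻¹` equals `s`, where `S` is the symmetric positive-definite
square root of `WᵀW`. -/
theorem statement_14 {N s : ℕ} (W : Matrix (Fin N) (Fin s) ℝ) (hrank : W.rank = s)
    (hsp : RowSparse s W)
    (S : Matrix (Fin s) (Fin s) ℝ) (hSsym : S.IsSymm) (hSpd : S.PosDef)
    (hSS : S * S = Wᵀ * W) :
    l21norm (W * S⁻¹) = s := by
  classical
  set U := W * S⁻¹ with hU
  have hdet : IsUnit S.det := Ne.isUnit (ne_of_gt hSpd.det_pos)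
  have hSinv : S⁻¹ * S = 1 := nonsing_inv_mul S (Ne.isUnit (ne_of_gt hSpd.det_pos))
  have hSinv' : S * S⁻¹ = 1 := mul_nonsing_inv S (Ne.isUnit (ne_of_gt hSpd.det_pos))
  -- U has orthonormal columns
  have hUorth : Uᵀ * U = 1 := by
    have hWtW : Wᵀ * W = S * S := hSS.symm
    have hSinvT : S⁻¹ᵀ = S⁻¹ := by
      rw [transpose_nonsing_inv, hSsym.eq]
    calc Uᵀ * U = S⁻¹ᵀ * (Wᵀ * W) * S⁻¹ := by
          rw [hU, transpose_mul]
          simp only [Matrix.mul_assoc]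
      _ = S⁻¹ * (S * S) * S⁻¹ := by rw [hSinvT, hWtW]
      _ = (S⁻¹ * S) * (S * S⁻¹) := by simp only [Matrix.mul_assoc]
      _ = 1 := by rw [hSinv, hSinv', one_mul]
  -- zero rows of W give zero rows of U
  have hzero : ∀ n : Fin N, W n = 0 → ∀ j, U n j = 0 := by
    intro n hn j
    simp [hU, mul_apply, funext_iff.mp hn]
  -- the support as a Finset
  set T : Finset (Fin N) := Finset.univ.filter (fun i => W i ≠ 0) with hT
  have hsupp : rowSupport W = ↑T := by
    ext i; simp [rowSupport, hT]
  have hTle : T.card ≤ s := by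
    have := hsp
    rwa [RowSparse, hsupp, Set.ncard_coe_finset] at this
  -- rank bound: s ≤ T.card via factorization W = E * M
  have hsle : s ≤ T.card := by
    set E : Matrix (Fin N) {x // x ∈ T} ℝ := fun i t => if i = (t : Fin N) then 1 else 0
    set M : Matrix {x // x ∈ T} (Fin s) ℝ := fun t j => W t j
    have hfac : W = E * M := by
      ext i j
      rw [mul_apply]
      by_cases hi : i ∈ T
      · rw [Finset.sum_eq_single (⟨i, hi⟩ : {x // x ∈ T})]
        · simp [E, M]
        · intro b _ hb
          have : i ≠ (b : Fin N) := fun h => hb (Subtype.ext h.symm)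
          simp [E, this]
        · simp
      · have hWi : W i = 0 := by
          by_contra h
          exact hi (by simp [hT, h])
        have : ∀ t : {x // x ∈ T}, E i t * M t j = 0 := by
          intro t
          have : i ≠ (t : Fin N) := by
            rintro rfl
            exact hi t.2
          simp [E, this]
        simp [this, funext_iff.mp hWi]
    calc s = W.rank := hrank.symm
      _ = (E * M).rank := by rw [hfac]
      _ ≤ M.rank := rank_mul_le_right E M
      _ ≤ Fintype.card {x // x ∈ T} := rank_le_card_height M
      _ = T.card := Fintype.card_coe T
  have hcard : T.card = s := le_antisymm hTle hsle
  -- equivalence Fin s ≃ T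
  have hcard' : Fintype.card {x // x ∈ T} = s := by rw [Fintype.card_coe, hcard]
  set e : Fin s ≃ {x // x ∈ T} := (Fintype.equivFinOfCardEq hcard').symm with he
  -- the square submatrix
  set B : Matrix (Fin s) (Fin s) ℝ := fun k j => U ((e k : Fin N)) j with hB
  have hBtB : Bᵀ * B = 1 := by
    funext i j
    have key : ∑ k : Fin s, U ((e k : Fin N)) i * U ((e k : Fin N)) j
        = ∑ n : Fin N, U n i * U n j := by
      rw [Equiv.sum_comp e (fun t : {x // x ∈ T} => U (t : Fin N) i * U (t : Fin N) j)]
      rw [Finset.sum_coe_sort T (fun n => U n i * U n j)]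
      refine Finset.sum_subset (Finset.subset_univ T) ?_
      intro n _ hn
      have hWn : W n = 0 := by
        by_contra h; exact hn (by simp [hT, h])
      rw [hzero n hWn i, zero_mul]
    have := congrFun (congrFun hUorth i) j
    rw [mul_apply] at this
    simp only [mul_apply, transpose_apply]; simp only [hB]
    rw [key]
    simpa [mul_apply, transpose_apply] using this
  have hBBt : B * Bᵀ = 1 := mul_eq_one_comm.mp hBtB
  -- each row of U indexed by T has unit norm
  have hrownorm : ∀ k : Fin s, ∑ j, (U ((e k : Fin N)) j) ^ 2 = 1 := by
    intro k
    have := congrFun (congrFun hBBt k) k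
    rw [mul_apply] at this
    simp only [transpose_apply] at this; simpa [hB, pow_two] using this
  -- conclude
  rw [l21norm]
  have hsum : ∑ i : Fin N, Real.sqrt (∑ j, (U i j) ^ 2)
      = ∑ i ∈ T, Real.sqrt (∑ j, (U i j) ^ 2) := by
    refine (Finset.sum_subset (Finset.subset_univ T) ?_).symm
    intro n _ hn
    have hWn : W n = 0 := by
      by_contra h; exact hn (by simp [hT, h])
    simp [hzero n hWn]
  rw [hsum, ← Finset.sum_coe_sort T,
    ← Equiv.sum_comp e (fun t : {x // x ∈ T} => Real.sqrt (∑ j, (U (t : Fin N) j) ^ 2))]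
  simp [hrownorm]
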